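/- (Uniform bound in the proof of Lemma 4.3.) Let a < c and δ > 0, and let g : [a,c] → ℝ be absolutely continuous with integrable derivative g' and |g(x)| ≤ 1/2 - δ for all x ∈ [a,c]. Then there exists M > 0, independent of λ, such that for every λ ∈ ℝ with λ ≠ 0 and every absolutely continuous θ : [a,c] → ℝ satisfying θ'(s) = λ(1/2 + g(s) cos 2θ(s)) a.e., one has |∫ₐˣ g(s) sin 2θ(s) ds| ≤ M/|λ| for all x ∈ [a,c]. -/

import Mathlib

open MeasureTheory Set

noncomputable section

open intervalIntegral


lemma myIntInt {a c x : ℝ} {q : ℝ → ℝ} (h : IntegrableOn q (Icc a c))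
    (hx : x ∈ Icc a c) : IntervalIntegrable q volume a x := by
  apply IntegrableOn.intervalIntegrable
  rw [uIcc_of_le hx.1]
  exact h.mono_set (Icc_subset_Icc_right hx.2)

lemma myCont {a c : ℝ} (hac : a ≤ c) {w q : ℝ → ℝ} (h : IntegrableOn q (Icc a c))
    (hw : ∀ x ∈ Icc a c, w x = w a + ∫ s in a..x, q s) :
    ContinuousOn w (Icc a c) := by
  have : ContinuousOn (fun x => w a + ∫ s in a..x, q s) (Icc a c) := by
    refine continuousOn_const.add ?_
    have := intervalIntegral.continuousOn_primitive_interval (a := a) (b := c) (f := q)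
      (μ := volume) (by rwa [uIcc_of_le hac])
    rwa [uIcc_of_le hac] at this
  exact this.congr hw

lemma myMulInt {a c : ℝ} {w q : ℝ → ℝ} (hw : ContinuousOn w (Icc a c))
    (h : IntegrableOn q (Icc a c)) : IntegrableOn (fun s => w s * q s) (Icc a c) := by
  obtain ⟨C, hC⟩ := (isCompact_Icc (a := a) (b := c)).exists_bound_of_continuousOn hw
  refine Integrable.bdd_mul (c := C) h (hw.aestronglyMeasurable measurableSet_Icc) ?_
  filter_upwards [ae_restrict_mem measurableSet_Icc] with s hs
  exact hC s hs

lemma myFubini {a x : ℝ} {q₁ q₂ : ℝ → ℝ}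
    (h₁ : IntegrableOn q₁ (Icc a x)) (h₂ : IntegrableOn q₂ (Icc a x)) :
    ∫ s in Icc a x, (∫ t in a..s, q₁ t) * q₂ s
      = ∫ t in Icc a x, q₁ t * (∫ s in t..x, q₂ s) := by
  have hS : MeasurableSet {p : ℝ × ℝ | p.2 ≤ p.1} :=
    measurableSet_le measurable_snd measurable_fst
  set f : ℝ → ℝ → ℝ := fun s t => ({p : ℝ × ℝ | p.2 ≤ p.1}).indicator
    (fun p => q₂ p.1 * q₁ p.2) (s, t) with hf
  have hint : Integrable (Function.uncurry f)
      ((volume.restrict (Icc a x)).prod (volume.restrict (Icc a x))) :=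
    (Integrable.mul_prod h₂ h₁).indicator hS
  have swap := MeasureTheory.integral_integral_swap hint
  have lhs : ∀ s ∈ Icc a x, (∫ t in Icc a x, f s t) = (∫ t in a..s, q₁ t) * q₂ s := by
    intro s hs
    have : ∀ t, f s t = (Iic s).indicator (fun t => q₂ s * q₁ t) t := by
      intro t
      simp only [hf, Set.indicator_apply, mem_setOf_eq, mem_Iic]
    simp_rw [this]
    rw [MeasureTheory.integral_indicator measurableSet_Iic,
      Measure.restrict_restrict measurableSet_Iic]
    have hset : Iic s ∩ Icc a x = Icc a s := by
      ext t; simp only [mem_inter_iff, mem_Iic, mem_Icc]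
      constructor
      · rintro ⟨h1, h2, h3⟩; exact ⟨h2, h1⟩
      · rintro ⟨h1, h2⟩; exact ⟨h2, h1, h2.trans hs.2⟩
    rw [hset, MeasureTheory.integral_const_mul, mul_comm,
      intervalIntegral.integral_of_le hs.1, integral_Icc_eq_integral_Ioc]
  have rhs : ∀ t ∈ Icc a x, (∫ s in Icc a x, f s t) = q₁ t * (∫ s in t..x, q₂ s) := by
    intro t ht
    have : ∀ s, f s t = (Ici t).indicator (fun s => q₂ s * q₁ t) s := by
      intro s
      simp only [hf, Set.indicator_apply, mem_setOf_eq, mem_Ici]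
    simp_rw [this]
    rw [MeasureTheory.integral_indicator measurableSet_Ici,
      Measure.restrict_restrict measurableSet_Ici]
    have hset : Ici t ∩ Icc a x = Icc t x := by
      ext s; simp only [mem_inter_iff, mem_Ici, mem_Icc]
      constructor
      · rintro ⟨h1, h2, h3⟩; exact ⟨h1, h3⟩
      · rintro ⟨h1, h2⟩; exact ⟨h1, ht.1.trans h1, h2⟩
    rw [hset, MeasureTheory.integral_mul_const, mul_comm,
      intervalIntegral.integral_of_le ht.2, integral_Icc_eq_integral_Ioc]
  calc ∫ s in Icc a x, (∫ t in a..s, q₁ t) * q₂ s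
      = ∫ s in Icc a x, (∫ t in Icc a x, f s t) :=
        (setIntegral_congr_fun measurableSet_Icc (fun s hs => (lhs s hs).symm))
    _ = ∫ t in Icc a x, (∫ s in Icc a x, f s t) := swap
    _ = ∫ t in Icc a x, q₁ t * (∫ s in t..x, q₂ s) :=
        setIntegral_congr_fun measurableSet_Icc rhs

/-- Product rule for functions in integral form. -/
lemma myProd {a c : ℝ} (hac : a ≤ c) {w₁ w₂ q₁ q₂ : ℝ → ℝ}
    (h₁ : IntegrableOn q₁ (Icc a c)) (h₂ : IntegrableOn q₂ (Icc a c))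
    (hw₁ : ∀ x ∈ Icc a c, w₁ x = w₁ a + ∫ s in a..x, q₁ s)
    (hw₂ : ∀ x ∈ Icc a c, w₂ x = w₂ a + ∫ s in a..x, q₂ s) :
    ∀ x ∈ Icc a c, w₁ x * w₂ x
      = w₁ a * w₂ a + ∫ s in a..x, (q₁ s * w₂ s + w₁ s * q₂ s) := by
  have hc₁ := myCont hac h₁ hw₁
  have hc₂ := myCont hac h₂ hw₂
  intro x hx
  have hsub : Icc a x ⊆ Icc a c := Icc_subset_Icc_right hx.2
  have h₁x : IntegrableOn q₁ (Icc a x) := h₁.mono_set hsub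
  have h₂x : IntegrableOn q₂ (Icc a x) := h₂.mono_set hsub
  have hqwc : IntegrableOn (fun s => q₁ s * w₂ s) (Icc a c) :=
    (myMulInt hc₂ h₁).congr (Filter.Eventually.of_forall fun s => mul_comm _ _)
  have hqw : IntegrableOn (fun s => q₁ s * w₂ s) (Icc a x) := hqwc.mono_set hsub
  have hwq : IntegrableOn (fun s => w₁ s * q₂ s) (Icc a x) :=
    (myMulInt hc₁ h₂).mono_set hsub
  have hPrim : IntegrableOn (fun s => (∫ t in a..s, q₁ t) * q₂ s) (Icc a x) := by
    refine myMulInt (c := x) ?_ h₂x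
    have h1 := intervalIntegral.continuousOn_primitive_interval (a := a) (b := x) (f := q₁)
      (μ := volume) (by rwa [uIcc_of_le hx.1])
    rwa [uIcc_of_le hx.1] at h1
  -- rewrite the interval integral as a set integral over Icc
  rw [intervalIntegral.integral_of_le hx.1, ← integral_Icc_eq_integral_Ioc]
  have split : ∫ s in Icc a x, (q₁ s * w₂ s + w₁ s * q₂ s)
      = (∫ s in Icc a x, q₁ s * w₂ s) + ∫ s in Icc a x, w₁ s * q₂ s :=
    integral_add hqw hwq
  have exp₂ : ∫ s in Icc a x, w₁ s * q₂ s
      = w₁ a * (∫ s in Icc a x, q₂ s) + ∫ s in Icc a x, (∫ t in a..s, q₁ t) * q₂ s := by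
    rw [← MeasureTheory.integral_const_mul, ← integral_add (h₂x.const_mul _) hPrim]
    refine setIntegral_congr_fun measurableSet_Icc (fun s hs => ?_)
    rw [hw₁ s (hsub hs)]; ring
  have fub := myFubini h₁x h₂x
  have rhsval : ∀ t ∈ Icc a x, q₁ t * (∫ s in t..x, q₂ s) = q₁ t * w₂ x - q₁ t * w₂ t := by
    intro t ht
    have : (∫ s in t..x, q₂ s) = (∫ s in a..x, q₂ s) - ∫ s in a..t, q₂ s :=
      (intervalIntegral.integral_interval_sub_left (myIntInt h₂ hx)
        (myIntInt h₂ (hsub ht))).symm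
    rw [this, hw₂ x hx, hw₂ t (hsub ht)]; ring
  have fub' : ∫ s in Icc a x, (∫ t in a..s, q₁ t) * q₂ s
      = (∫ t in Icc a x, q₁ t) * w₂ x - ∫ t in Icc a x, q₁ t * w₂ t := by
    rw [fub, setIntegral_congr_fun measurableSet_Icc rhsval,
      integral_sub ((h₁x.mul_const _)) ?_, MeasureTheory.integral_mul_const]
    exact hqwc.mono_set hsub
  have hq₁ : ∫ s in Icc a x, q₁ s = w₁ x - w₁ a := by
    rw [hw₁ x hx, intervalIntegral.integral_of_le hx.1, ← integral_Icc_eq_integral_Ioc]; ring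
  have hq₂ : ∫ s in Icc a x, q₂ s = w₂ x - w₂ a := by
    rw [hw₂ x hx, intervalIntegral.integral_of_le hx.1, ← integral_Icc_eq_integral_Ioc]; ring
  rw [split, exp₂, fub', hq₁, hq₂]; ring

section
variable {a c : ℝ}

lemma myPowInt {w q : ℝ → ℝ} (hc : ContinuousOn w (Icc a c))
    (h : IntegrableOn q (Icc a c)) (n : ℕ) (b : ℝ) :
    IntegrableOn (fun s => b * (w s) ^ n * q s) (Icc a c) := by
  have := myMulInt (w := fun s => b * (w s) ^ n) (continuousOn_const.mul (hc.pow n)) h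
  exact this

lemma myPow (hac : a ≤ c) {w q : ℝ → ℝ}
    (h : IntegrableOn q (Icc a c))
    (hw : ∀ x ∈ Icc a c, w x = w a + ∫ s in a..x, q s) :
    ∀ n : ℕ, ∀ x ∈ Icc a c,
      (w x) ^ (n + 1) = (w a) ^ (n + 1) + ∫ s in a..x, ((n : ℝ) + 1) * (w s) ^ n * q s := by
  have hc := myCont hac h hw
  intro n
  induction n with
  | zero =>
    intro x hx
    have := hw x hx
    simpa using this
  | succ n ih =>
    have hqn : IntegrableOn (fun s => ((n : ℝ) + 1) * (w s) ^ n * q s) (Icc a c) :=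
      myPowInt hc h n _
    have := myProd hac hqn h ih hw
    intro x hx
    have h2 := this x hx
    rw [← pow_succ, ← pow_succ] at h2
    rw [h2]
    congr 1
    apply intervalIntegral.integral_congr
    intro s _
    push_cast
    ring

lemma myLog (hac : a ≤ c) {u q : ℝ → ℝ} {δ : ℝ} (hδ : 0 < δ)
    (h : IntegrableOn q (Icc a c))
    (hu : ∀ x ∈ Icc a c, u x = u a + ∫ s in a..x, q s)
    (hlb : ∀ x ∈ Icc a c, δ ≤ u x) (hub : ∀ x ∈ Icc a c, u x ≤ 1) :
    ∀ x ∈ Icc a c, Real.log (u x) = Real.log (u a) + ∫ s in a..x, q s / u s := by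
  have huc := myCont hac h hu
  set z : ℝ → ℝ := fun s => 1 - u s with hz
  have hzc : ContinuousOn z (Icc a c) := continuousOn_const.sub huc
  have hzbd : ∀ x ∈ Icc a c, 0 ≤ z x ∧ z x ≤ 1 - δ := by
    intro x hx
    constructor
    · simp only [hz, sub_nonneg]; exact hub x hx
    · simp only [hz]; linarith [hlb x hx]
  have hδ1 : 1 - δ < 1 := by linarith
  have hδ0 : (0:ℝ) ≤ 1 - δ := by
    have := (hzbd a ⟨le_refl a, hac⟩)
    linarith [this.1, this.2]
  have hzw : ∀ x ∈ Icc a c, z x = z a + ∫ s in a..x, (-q s) := by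
    intro x hx
    simp only [hz, intervalIntegral.integral_neg]
    rw [hu x hx]; ring
  have hpow := myPow hac h.neg hzw
  intro x hx
  have hsub : Icc a x ⊆ Icc a c := Icc_subset_Icc_right hx.2
  -- HasSum for log at x and a
  have hsx : HasSum (fun n : ℕ => (z x) ^ (n + 1) / ((n:ℝ) + 1)) (-Real.log (u x)) := by
    have habs : |z x| < 1 := by
      rw [abs_of_nonneg (hzbd x hx).1]; exact lt_of_le_of_lt (hzbd x hx).2 hδ1
    have := Real.hasSum_pow_div_log_of_abs_lt_one habs
    have h1 : 1 - z x = u x := by simp [hz]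
    rwa [h1] at this
  have hsa : HasSum (fun n : ℕ => (z a) ^ (n + 1) / ((n:ℝ) + 1)) (-Real.log (u a)) := by
    have ha : a ∈ Icc a c := ⟨le_refl a, hac⟩
    have habs : |z a| < 1 := by
      rw [abs_of_nonneg (hzbd a ha).1]; exact lt_of_le_of_lt (hzbd a ha).2 hδ1
    have := Real.hasSum_pow_div_log_of_abs_lt_one habs
    have h1 : 1 - z a = u a := by simp [hz]
    rwa [h1] at this
  -- HasSum for the integrals
  have hGint : ∀ n : ℕ, Integrable (fun s => (z s) ^ n * q s) (volume.restrict (Icc a x)) := by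
    intro n
    exact (myMulInt (hzc.pow n) h).mono_set hsub
  have hqx : IntegrableOn q (Icc a x) := h.mono_set hsub
  have hnorm : ∀ n : ℕ, ∫ s in Icc a x, ‖(z s) ^ n * q s‖
      ≤ (1 - δ) ^ n * ∫ s in Icc a x, |q s| := by
    intro n
    rw [← MeasureTheory.integral_const_mul]
    refine setIntegral_mono_on (hGint n).norm ((hqx.abs).const_mul _) measurableSet_Icc ?_
    intro s hs
    rw [Real.norm_eq_abs, abs_mul, abs_pow, abs_of_nonneg (hzbd s (hsub hs)).1]
    exact mul_le_mul_of_nonneg_right (pow_le_pow_left₀ (hzbd s (hsub hs)).1 (hzbd s (hsub hs)).2 n)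
      (abs_nonneg _)
  have hsummable : Summable (fun n : ℕ => ∫ s in Icc a x, ‖(z s) ^ n * q s‖) := by
    refine Summable.of_nonneg_of_le (fun n => integral_nonneg (fun s => norm_nonneg _))
      hnorm ?_
    exact (summable_geometric_of_lt_one hδ0 hδ1).mul_right _
  have hswap := MeasureTheory.hasSum_integral_of_summable_integral_norm hGint hsummable
  have htsum : ∀ s ∈ Icc a x, (∑' n : ℕ, (z s) ^ n * q s) = q s / u s := by
    intro s hs
    rw [tsum_mul_right, tsum_geometric_of_lt_one (hzbd s (hsub hs)).1
      (lt_of_le_of_lt (hzbd s (hsub hs)).2 hδ1)]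
    have : 1 - z s = u s := by simp [hz]
    rw [this, inv_mul_eq_div]
  have hswap' : HasSum (fun n : ℕ => ∫ s in Icc a x, (z s) ^ n * q s)
      (∫ s in Icc a x, q s / u s) := by
    rwa [setIntegral_congr_fun measurableSet_Icc htsum] at hswap
  -- each term: z x ^(n+1)/(n+1) = z a^(n+1)/(n+1) - ∫ z^n q
  have hterm : ∀ n : ℕ, (z x) ^ (n + 1) / ((n:ℝ) + 1)
      = (z a) ^ (n + 1) / ((n:ℝ) + 1) - ∫ s in Icc a x, (z s) ^ n * q s := by
    intro n
    have := hpow n x hx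
    simp only [Pi.neg_apply] at this
    have hrw : (∫ s in a..x, ((n : ℝ) + 1) * (z s) ^ n * (-q s))
        = -(((n:ℝ)+1) * ∫ s in Icc a x, (z s) ^ n * q s) := by
      rw [intervalIntegral.integral_of_le hx.1, ← integral_Icc_eq_integral_Ioc,
        ← MeasureTheory.integral_const_mul, ← MeasureTheory.integral_neg]
      apply setIntegral_congr_fun measurableSet_Icc
      intro s _; ring
    rw [hrw] at this
    have hne : ((n:ℝ) + 1) ≠ 0 := by positivity
    field_simp
    linarith [this]
  have hfinal : HasSum (fun n : ℕ => (z x) ^ (n + 1) / ((n:ℝ) + 1))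
      (-Real.log (u a) - ∫ s in Icc a x, q s / u s) := by
    have := hsa.sub hswap'
    simpa [hterm] using this
  have := hsx.unique hfinal
  rw [intervalIntegral.integral_of_le hx.1, ← integral_Icc_eq_integral_Ioc]
  linarith [this]
end

/-- uniform bound in the proof of Lemma 4.3. If `g` is absolutely
continuous with `|g| ≤ 1/2 - δ` on `[a,c]`, there is `M > 0`, independent of `λ`, such
that for every `λ ≠ 0` and every Prüfer angle `θ` with `θ' = λ(1/2 + g cos 2θ)` a.e.,
`|∫ₐˣ g sin 2θ| ≤ M/|λ|` for all `x ∈ [a,c]`. -/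
theorem pruefer_uniform_bound
    (a c δ : ℝ) (hac : a < c) (hδ : 0 < δ)
    (g gd : ℝ → ℝ)
    (hgdint : IntegrableOn gd (Icc a c))
    (hg : ∀ x ∈ Icc a c, g x = g a + ∫ s in a..x, gd s)
    (hgbd : ∀ x ∈ Icc a c, |g x| ≤ 1/2 - δ) :
    ∃ M > 0, ∀ lam : ℝ, lam ≠ 0 → ∀ θ : ℝ → ℝ,
      ContinuousOn θ (Icc a c) →
      (∀ x ∈ Icc a c,
        θ x = θ a + ∫ s in a..x, lam * (1/2 + g s * Real.cos (2 * θ s))) →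
      ∀ x ∈ Icc a c,
        |∫ s in a..x, g s * Real.sin (2 * θ s)| ≤ M / |lam| := by
  have hac' : a ≤ c := hac.le
  have ha : a ∈ Icc a c := ⟨le_refl a, hac'⟩
  have hgc : ContinuousOn g (Icc a c) := myCont hac' hgdint hg
  have hδhalf : δ ≤ 1/2 := by
    have := hgbd a ha
    have h0 : (0:ℝ) ≤ |g a| := abs_nonneg _
    linarith
  set K : ℝ := (1/δ) * ∫ s in Icc a c, |gd s| with hK
  have hK0 : 0 ≤ K := by
    apply mul_nonneg (by positivity)
    exact integral_nonneg (fun s => abs_nonneg _)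
  set L : ℝ := -Real.log δ with hL
  have hL0 : 0 < L := by
    have := Real.log_neg hδ (by linarith : δ < 1)
    simp only [hL]; linarith
  refine ⟨(K + 2 * L) / 2 + 1, by positivity, ?_⟩
  intro lam hlam θ hθc hθ
  set v : ℝ → ℝ := fun s => Real.cos (2 * θ s) with hv_def
  set u : ℝ → ℝ := fun s => 1/2 + g s * Real.cos (2 * θ s) with hu_def
  set f : ℝ → ℝ := fun s => lam * (1/2 + g s * Real.cos (2 * θ s)) with hf_def
  set vd : ℝ → ℝ := fun s => -Real.sin (2 * θ s) * (2 * f s) with hvd_def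
  have hvc : ContinuousOn v (Icc a c) :=
    Real.continuous_cos.comp_continuousOn (continuousOn_const.mul hθc)
  have huc : ContinuousOn u (Icc a c) :=
    continuousOn_const.add (hgc.mul hvc)
  have hfc : ContinuousOn f (Icc a c) := continuousOn_const.mul huc
  have hvdc : ContinuousOn vd (Icc a c) := by
    apply ContinuousOn.mul
    · exact (Real.continuous_sin.comp_continuousOn (continuousOn_const.mul hθc)).neg
    · exact continuousOn_const.mul hfc
  have hfint : IntegrableOn f (Icc a c) := hfc.integrableOn_Icc
  have hvdint : IntegrableOn vd (Icc a c) := hvdc.integrableOn_Icc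
  -- bounds on u
  have hulb : ∀ x ∈ Icc a c, δ ≤ u x := by
    intro x hx
    have h1 : |g x * v x| ≤ 1/2 - δ := by
      rw [abs_mul]
      calc |g x| * |v x| ≤ (1/2 - δ) * 1 := by
            apply mul_le_mul (hgbd x hx) (by simpa [hv_def] using Real.abs_cos_le_one (2 * θ x))
              (abs_nonneg _) (by linarith [hgbd x hx, abs_nonneg (g x)])
        _ = 1/2 - δ := by ring
    have := abs_le.1 h1
    simp only [hu_def]
    have : -(1/2 - δ) ≤ g x * Real.cos (2 * θ x) := by
      simpa [hv_def] using this.1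
    linarith
  have huub : ∀ x ∈ Icc a c, u x ≤ 1 := by
    intro x hx
    have h1 : |g x * v x| ≤ 1/2 - δ := by
      rw [abs_mul]
      calc |g x| * |v x| ≤ (1/2 - δ) * 1 := by
            apply mul_le_mul (hgbd x hx) (by simpa [hv_def] using Real.abs_cos_le_one (2 * θ x))
              (abs_nonneg _) (by linarith [hgbd x hx, abs_nonneg (g x)])
        _ = 1/2 - δ := by ring
    have h2 := (abs_le.1 h1).2
    have : g x * Real.cos (2 * θ x) ≤ 1/2 - δ := by simpa [hv_def] using h2
    simp only [hu_def]; linarith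
  -- FTC: integral form of v
  have hv : ∀ x ∈ Icc a c, v x = v a + ∫ s in a..x, vd s := by
    intro x hx
    have key : ∫ s in a..x, vd s = v x - v a := by
      apply intervalIntegral.integral_eq_sub_of_hasDeriv_right_of_le hx.1
        (hvc.mono (Icc_subset_Icc_right hx.2))
      · intro s hs
        have hsc : s ∈ Ioo a c := ⟨hs.1, lt_of_lt_of_le hs.2 hx.2⟩
        have hmem : Icc a c ∈ nhds s := Icc_mem_nhds hsc.1 hsc.2
        have hfcont : ContinuousAt f s :=
          (hfc s ⟨hsc.1.le, hsc.2.le⟩).continuousAt hmem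
        have hPder : HasDerivAt (fun t => ∫ r in a..t, f r) (f s) s := by
          apply intervalIntegral.integral_hasDerivAt_right
            (myIntInt hfint ⟨hsc.1.le, hsc.2.le⟩)
            ⟨Icc a c, hmem, hfc.aestronglyMeasurable measurableSet_Icc⟩ hfcont
        have hθev : (fun t => θ a + ∫ r in a..t, f r) =ᶠ[nhds s] θ := by
          filter_upwards [hmem] with t ht
          exact (hθ t ht).symm
        have hθd : HasDerivAt θ (f s) s :=
          ((hPder.const_add (θ a)).congr_of_eventuallyEq hθev.symm)
        have h2θ : HasDerivAt (fun t => 2 * θ t) (2 * f s) s := hθd.const_mul 2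
        have hcos : HasDerivAt (fun t => Real.cos (2 * θ t))
            (-Real.sin (2 * θ s) * (2 * f s)) s :=
          by have := (Real.hasDerivAt_cos (2 * θ s)).comp s h2θ; exact this
        exact hcos.hasDerivWithinAt
      · exact myIntInt hvdint hx
    rw [key]; ring
  -- integral form of u = 1/2 + g * v
  set q : ℝ → ℝ := fun s => gd s * v s + g s * vd s with hq_def
  have hqint : IntegrableOn q (Icc a c) := by
    apply Integrable.add
    · exact (myMulInt hvc hgdint).congr (Filter.Eventually.of_forall fun s => mul_comm _ _)
    · exact myMulInt hgc hvdint
  have hu : ∀ x ∈ Icc a c, u x = u a + ∫ s in a..x, q s := by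
    intro x hx
    have := myProd hac' hgdint hvdint hg hv x hx
    simp only [hu_def]
    rw [show g x * Real.cos (2 * θ x) = g x * v x from rfl,
      show g a * Real.cos (2 * θ a) = g a * v a from rfl, this]
    ring
  have hlog := myLog hac' hδ hqint hu hulb huub
  -- main identity
  intro x hx
  have hune : ∀ s ∈ Icc a c, u s ≠ 0 := fun s hs => by linarith [hulb s hs]
  have hvuc : ContinuousOn (fun s => v s / u s) (Icc a c) := hvc.div huc hune
  have hgdvu_int : IntegrableOn (fun s => gd s * v s / u s) (Icc a c) :=
    (myMulInt hvuc hgdint).congr (Filter.Eventually.of_forall fun s => by ring)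
  have hgsin_int : IntegrableOn (fun s => g s * Real.sin (2 * θ s)) (Icc a c) :=
    (hgc.mul (Real.continuous_sin.comp_continuousOn
      (continuousOn_const.mul hθc))).integrableOn_Icc
  have hsplit : ∫ s in a..x, q s / u s
      = (∫ s in a..x, gd s * v s / u s)
        + (-2 * lam) * ∫ s in a..x, g s * Real.sin (2 * θ s) := by
    rw [← intervalIntegral.integral_const_mul, ← intervalIntegral.integral_add
      (myIntInt hgdvu_int hx) ((myIntInt hgsin_int hx).const_mul _)]
    apply intervalIntegral.integral_congr
    intro s hs
    have hs' : s ∈ Icc a c := by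
      rw [uIcc_of_le hx.1] at hs
      exact ⟨hs.1, hs.2.trans hx.2⟩
    have hus := hune s hs'
    have hfu : f s = lam * u s := rfl
    simp only [hq_def, hvd_def, hfu]
    field_simp
  -- bound |∫ gd v / u| ≤ K
  have hI1 : |∫ s in a..x, gd s * v s / u s| ≤ K := by
    rw [intervalIntegral.integral_of_le hx.1, ← integral_Icc_eq_integral_Ioc]
    have h1 : |∫ s in Icc a x, gd s * v s / u s| ≤ ∫ s in Icc a x, |gd s * v s / u s| := by
      have := MeasureTheory.norm_integral_le_integral_norm (μ := volume.restrict (Icc a x))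
          (fun s => gd s * v s / u s)
      simp only [Real.norm_eq_abs] at this
      exact this
    have h2 : ∫ s in Icc a x, |gd s * v s / u s| ≤ ∫ s in Icc a x, (1/δ) * |gd s| := by
      apply setIntegral_mono_on
      · exact (hgdvu_int.mono_set (Icc_subset_Icc_right hx.2)).abs
      · exact ((hgdint.mono_set (Icc_subset_Icc_right hx.2)).abs).const_mul _
      · exact measurableSet_Icc
      · intro s hs
        have hs' : s ∈ Icc a c := ⟨hs.1, hs.2.trans hx.2⟩
        rw [abs_div, abs_mul]
        rw [abs_of_pos (lt_of_lt_of_le hδ (hulb s hs'))]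
        rw [div_le_iff₀ (lt_of_lt_of_le hδ (hulb s hs'))]
        calc |gd s| * |v s| ≤ |gd s| * 1 := by
              apply mul_le_mul_of_nonneg_left _ (abs_nonneg _)
              simpa [hv_def] using Real.abs_cos_le_one (2 * θ s)
          _ = |gd s| := by ring
          _ ≤ 1/δ * |gd s| * δ := by
              rw [mul_comm (1/δ) _, mul_assoc, one_div, inv_mul_cancel₀ hδ.ne', mul_one]
          _ ≤ 1/δ * |gd s| * u s := by
              exact mul_le_mul_of_nonneg_left (hulb s hs') (by positivity)

    have h3 : ∫ s in Icc a x, (1/δ) * |gd s| ≤ ∫ s in Icc a c, (1/δ) * |gd s| := by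
      apply setIntegral_mono_set (hgdint.abs.const_mul _)
      · filter_upwards with s using by positivity
      · exact HasSubset.Subset.eventuallyLE (Icc_subset_Icc_right hx.2)
    calc |∫ s in Icc a x, gd s * v s / u s| ≤ ∫ s in Icc a x, |gd s * v s / u s| := h1
      _ ≤ ∫ s in Icc a x, (1/δ) * |gd s| := h2
      _ ≤ K := by rw [hK, ← MeasureTheory.integral_const_mul]; exact h3
  -- bound on logs
  have hlogbd : ∀ y ∈ Icc a c, |Real.log (u y)| ≤ L := by
    intro y hy
    rw [abs_le]
    constructor
    · simp only [hL, neg_neg]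
      exact Real.log_le_log hδ (hulb y hy)
    · have : Real.log (u y) ≤ 0 :=
        Real.log_nonpos (by linarith [hulb y hy]) (huub y hy)
      linarith
  -- conclude
  have hkey := hlog x hx
  rw [hsplit] at hkey
  have heq : (2 * lam) * (∫ s in a..x, g s * Real.sin (2 * θ s))
      = (∫ s in a..x, gd s * v s / u s) - (Real.log (u x) - Real.log (u a)) := by
    linarith [hkey]
  have habs : |2 * lam| * |∫ s in a..x, g s * Real.sin (2 * θ s)| ≤ K + 2 * L := by
    rw [← abs_mul, heq]
    have hA : |(∫ s in a..x, gd s * v s / u s) - (Real.log (u x) - Real.log (u a))|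
        ≤ |∫ s in a..x, gd s * v s / u s| + |Real.log (u x) - Real.log (u a)| := abs_sub _ _
    have hB : |Real.log (u x) - Real.log (u a)|
        ≤ |Real.log (u x)| + |Real.log (u a)| := abs_sub _ _
    linarith [hI1, hlogbd x hx, hlogbd a ha]
  have hlam' : 0 < |lam| := abs_pos.2 hlam
  rw [abs_mul, abs_two] at habs
  rw [le_div_iff₀ hlam']
  nlinarith [abs_nonneg (∫ s in a..x, g s * Real.sin (2 * θ s))]
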